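/- Let s > 0, y ∈ A_s ∖ ∂P, and x := ∇u_s**(y). Then co{(−u̇₀(v), v) : v ∈ γ_xψ(s,x)} ⊂ ∂ψ(s,x) ⊂ co{(−u̇₀(v), v) : v ∈ ∂_xψ(s,x)}, where co denotes the convex hull in ℝ^{n+1} and ∂ψ(s,x) is the total subdifferential of ψ at (s,x). -/

import Mathlib

noncomputable section

open Set MeasureTheory Topology Filter
open scoped RealInnerProductSpace Pointwise

/-- Euclidean space ℝⁿ. -/
abbrev E (n : ℕ) := EuclideanSpace ℝ (Fin n)

/-- The affine functions `l_k(y) = ⟨y, v_k⟩ − λ_k` defining the polytope. -/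
def lfun {n d : ℕ} (v : Fin d → E n) (lam : Fin d → ℝ) (k : Fin d) (y : E n) : ℝ :=
  ⟪y, v k⟫ - lam k

/-- The polytope `P = ⋂_k {l_k ≥ 0}`. -/
def Pset {n d : ℕ} (v : Fin d → E n) (lam : Fin d → ℝ) : Set (E n) :=
  {y | ∀ k, 0 ≤ lfun v lam k y}

/-- Guillemin's canonical symplectic potential `u_G = Σ l_k log l_k`
(note `Real.log 0 = 0`, so `t log t = 0` at `t = 0`). -/
def uG {n d : ℕ} (v : Fin d → E n) (lam : Fin d → ℝ) (y : E n) : ℝ :=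
  ∑ k, lfun v lam k y * Real.log (lfun v lam k y)

/-- The biconjugate (convex envelope) over `P`:
`g**(y) = sup {a(y) : a affine on ℝⁿ, a ≤ g on P}`. -/
def biconj {n : ℕ} (P : Set (E n)) (g : E n → ℝ) (y : E n) : ℝ :=
  sSup {r : ℝ | ∃ (a : E n →L[ℝ] ℝ) (c : ℝ), (∀ z ∈ P, a z + c ≤ g z) ∧ r = a y + c}

/-- The subdifferential of `g : P → ℝ` at `y`, relative to `P`. -/
def subdiff {n : ℕ} (P : Set (E n)) (g : E n → ℝ) (y : E n) : Set (E n) :=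
  {w | ∀ z ∈ P, g y + ⟪w, z - y⟫ ≤ g z}

/-- The subdifferential of a finite (convex) function on all of ℝⁿ. -/
def subdiffR {n : ℕ} (f : E n → ℝ) (x : E n) : Set (E n) :=
  {w | ∀ z, f x + ⟪w, z - x⟫ ≤ f z}

/-- The total subdifferential of `ψ(s,x)` at `(s,x)`, a subset of `ℝ × ℝⁿ = ℝ^{n+1}`. -/
def subdiffT {n : ℕ} (ψ : ℝ → E n → ℝ) (s : ℝ) (x : E n) : Set (ℝ × E n) :=
  {w | ∀ t z, ψ s x + w.1 * (t - s) + ⟪w.2, z - x⟫ ≤ ψ t z}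

/-- The set of reachable partial `x`-subgradients `γ_x ψ(s,x)`. -/
def reachable {n : ℕ} (ψ : ℝ → E n → ℝ) (s : ℝ) (x : E n) : Set (E n) :=
  {w | ∃ xk : ℕ → E n, (∀ k, DifferentiableAt ℝ (ψ s) (xk k)) ∧
    Tendsto xk atTop (𝓝 x) ∧
    Tendsto (fun k => gradient (ψ s) (xk k)) atTop (𝓝 w)}

/-- `P` is a compact Delzant polytope with nonempty interior, cut out by the `l_k`,
with all facets of dimension `n−1`, and every vertex lying on exactly `n` of the
hyperplanes `{l_k = 0}` with linearly independent normals. -/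
def GoodPolytope {n d : ℕ} (v : Fin d → E n) (lam : Fin d → ℝ) (P : Set (E n)) : Prop :=
  P = Pset v lam ∧ IsCompact P ∧ (interior P).Nonempty ∧
  (∀ k, Module.finrank ℝ (affineSpan ℝ (P ∩ {y | lfun v lam k y = 0})).direction = n - 1) ∧
  (∀ p ∈ Set.extremePoints ℝ P, ∃ K : Finset (Fin d), K.card = n ∧
    (∀ k, k ∈ K ↔ lfun v lam k p = 0) ∧ LinearIndependent ℝ (fun k : K => v ↑k))

/-- The Cauchy data: `u₀ − u_G` extends smoothly to a neighborhood of `P`, `u₀` is convex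
on `P`, smooth with positive definite Hessian on `int P`; `u̇₀` extends smoothly to a
neighborhood of `P`. -/
def GoodData {n d : ℕ} (v : Fin d → E n) (lam : Fin d → ℝ) (P : Set (E n))
    (u₀ udot : E n → ℝ) : Prop :=
  (∃ U : Set (E n), IsOpen U ∧ P ⊆ U ∧ ∃ F : E n → ℝ, ContDiffOn ℝ (⊤ : ℕ∞) F U ∧
    ∀ y ∈ P, u₀ y = uG v lam y + F y) ∧
  ConvexOn ℝ P u₀ ∧
  ContDiffOn ℝ (⊤ : ℕ∞) u₀ (interior P) ∧
  (∀ y ∈ interior P, ∀ w : E n, w ≠ 0 → 0 < ⟪(fderiv ℝ (gradient u₀) y) w, w⟫) ∧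
  (∃ U : Set (E n), IsOpen U ∧ P ⊆ U ∧ ContDiffOn ℝ (⊤ : ℕ∞) udot U)


lemma isCompact_convexHull_of_isCompact {V : Type*} [NormedAddCommGroup V] [NormedSpace ℝ V]
    [FiniteDimensional ℝ V] {s : Set V} (hs : IsCompact s) :
    IsCompact (convexHull ℝ s) := by
  classical
  rcases s.eq_empty_or_nonempty with rfl | ⟨x₀, hx₀⟩
  · simpa using isCompact_empty
  set m := Module.finrank ℝ V + 1 with hm
  set T : Set ((Fin m → ℝ) × (Fin m → V)) :=
    (stdSimplex ℝ (Fin m)) ×ˢ (Set.pi Set.univ fun _ => s) with hT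
  have hTc : IsCompact T := IsCompact.prod (isCompact_stdSimplex ℝ (Fin m)) (isCompact_univ_pi fun _ => hs)
  have hg : Continuous (fun q : (Fin m → ℝ) × (Fin m → V) => ∑ i, q.1 i • q.2 i) := by
    refine continuous_finset_sum _ fun i _ => Continuous.smul ?_ ?_
    · exact (continuous_apply i).comp continuous_fst
    · exact (continuous_apply i).comp continuous_snd
  have himg : (fun q : (Fin m → ℝ) × (Fin m → V) => ∑ i, q.1 i • q.2 i) '' T
      = convexHull ℝ s := by
    apply Subset.antisymm
    · rintro - ⟨⟨wt, zt⟩, ⟨⟨hw0, hw1⟩, hz⟩, rfl⟩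
      exact (convex_convexHull ℝ s).sum_mem (fun i _ => hw0 i) hw1
        (fun i _ => subset_convexHull ℝ s (hz i (mem_univ i)))
    · intro p hp
      obtain ⟨ι, hfin, z, w, hzs, hai, hw0, hw1, hcomb⟩ := eq_pos_convex_span_of_mem_convexHull hp
      letI : Fintype ι := hfin
      haveI hne : Nonempty ι := by
        rcases isEmpty_or_nonempty ι with h | h
        · exact absurd hw1.symm (by simp [Finset.univ_eq_empty])
        · exact h
      have hcard : Fintype.card ι ≤ m := by
        refine le_trans hai.card_le_finrank_succ ?_
        have := Submodule.finrank_le (vectorSpan ℝ (Set.range z))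
        omega
      obtain ⟨e⟩ := Function.Embedding.nonempty_of_card_le (by simpa using hcard :
        Fintype.card ι ≤ Fintype.card (Fin m))
      set σ : Fin m → ι := Function.invFun e with hσ
      have hσe : ∀ j, σ (e j) = j := fun j => Function.leftInverse_invFun e.injective j
      set wt : Fin m → ℝ := fun i => if e (σ i) = i then w (σ i) else 0 with hwt
      set zt : Fin m → V := fun i => z (σ i) with hzt
      have hfilter : Finset.univ.filter (fun i => e (σ i) = i) = Finset.image e Finset.univ := by
        ext i
        simp only [Finset.mem_filter, Finset.mem_image, Finset.mem_univ, true_and]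
        constructor
        · intro h; exact ⟨σ i, h⟩
        · rintro ⟨j, rfl⟩; rw [hσe]
      have hkeyR : ∀ g : ι → ℝ, ∑ i, (if e (σ i) = i then g (σ i) else 0) = ∑ j, g j := by
        intro g
        rw [← Finset.sum_filter, hfilter,
          Finset.sum_image (fun a _ b _ h => e.injective h)]
        simp [hσe]
      have hkeyV : ∀ g : ι → V, ∑ i, (if e (σ i) = i then g (σ i) else 0) = ∑ j, g j := by
        intro g
        rw [← Finset.sum_filter, hfilter,
          Finset.sum_image (fun a _ b _ h => e.injective h)]
        simp [hσe]
      refine ⟨(wt, zt), ⟨⟨fun i => ?_, ?_⟩, fun i _ => ?_⟩, ?_⟩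
      · show 0 ≤ wt i
        have h1 : wt i = if e (σ i) = i then w (σ i) else 0 := rfl
        rw [h1]; split_ifs with h
        · exact (hw0 _).le
        · exact le_rfl
      · show ∑ i, wt i = 1
        have h1 : ∑ i, wt i = ∑ i, (if e (σ i) = i then w (σ i) else 0) := rfl
        rw [h1, hkeyR w, hw1]
      · show zt i ∈ s
        exact hzs ⟨σ i, rfl⟩
      · show ∑ i, wt i • zt i = p
        have h1 : ∀ i, wt i • zt i = if e (σ i) = i then w (σ i) • z (σ i) else 0 := by
          intro i
          have h2 : wt i = if e (σ i) = i then w (σ i) else 0 := rfl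
          rw [h2]; split_ifs
          · rfl
          · rw [zero_smul]
        calc ∑ i, wt i • zt i = ∑ i, (if e (σ i) = i then w (σ i) • z (σ i) else 0) :=
              Finset.sum_congr rfl fun i _ => h1 i
          _ = ∑ j, w j • z j := hkeyV (fun j => w j • z j)
          _ = p := hcomb
  exact himg ▸ hTc.image hg

lemma grad_eq_of_subgrad {n : ℕ} {g : E n → ℝ} {x₀ y₀ : E n}
    (hd : DifferentiableAt ℝ g x₀)
    (hsub : ∀ z, g x₀ + ⟪y₀, z - x₀⟫ ≤ g z) : gradient g x₀ = y₀ := by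
  set G := gradient g x₀ with hG
  set e := y₀ - G with he
  have hf : HasFDerivAt g (InnerProductSpace.toDual ℝ (E n) G) x₀ := hd.hasGradientAt.hasFDerivAt
  have hline : HasDerivAt (fun t : ℝ => x₀ + t • e) e 0 := by
    simpa using ((hasDerivAt_id (0:ℝ)).smul_const e).const_add x₀
  have h0 : x₀ + (0:ℝ) • e = x₀ := by simp
  have hcomp : HasDerivAt (fun t : ℝ => g (x₀ + t • e)) ⟪G, e⟫ 0 := by
    have hf' : HasFDerivAt g (InnerProductSpace.toDual ℝ (E n) G) (x₀ + (0:ℝ) • e) := by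
      rw [h0]; exact hf
    have := hf'.comp_hasDerivAt 0 hline
    simpa [InnerProductSpace.toDual_apply_apply, Function.comp_def] using this
  have hder : HasDerivAt (fun t : ℝ => g (x₀ + t • e) - t * ⟪y₀, e⟫) (⟪G, e⟫ - ⟪y₀, e⟫) 0 :=
    hcomp.sub (hasDerivAt_mul_const _)
  have hmin : IsLocalMin (fun t : ℝ => g (x₀ + t • e) - t * ⟪y₀, e⟫) 0 := by
    apply Filter.Eventually.of_forall
    intro t
    have hst := hsub (x₀ + t • e)
    have h1 : ⟪y₀, x₀ + t • e - x₀⟫ = t * ⟪y₀, e⟫ := by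
      rw [add_sub_cancel_left, real_inner_smul_right]
    simp only [zero_smul, add_zero, zero_mul, sub_zero]
    linarith [h1.ge, h1.le]
  have hz : ⟪G, e⟫ - ⟪y₀, e⟫ = 0 := hmin.hasDerivAt_eq_zero hder
  have h2 : ⟪y₀ - G, y₀ - G⟫ = 0 := by
    rw [← he, inner_sub_left]; linarith
  have h3 := inner_self_eq_zero.mp h2
  rw [sub_eq_zero] at h3
  exact h3.symm

set_option maxHeartbeats 1000000 in
/-- For `s > 0`, `y ∈ A_s ∖ ∂P` and `x = ∇u_s**(y)`:
`co{(−u̇₀(v), v) : v ∈ γ_x ψ(s,x)} ⊆ ∂ψ(s,x) ⊆ co{(−u̇₀(v), v) : v ∈ ∂_x ψ(s,x)}`. -/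
theorem total_subdifferential_bounds
    {n d : ℕ} (hn : 1 ≤ n)
    (v : Fin d → E n) (lam : Fin d → ℝ) (P : Set (E n))
    (hP : GoodPolytope v lam P)
    (u₀ udot : E n → ℝ) (hD : GoodData v lam P u₀ udot)
    (u : ℝ → E n → ℝ) (hu : ∀ s y, u s y = u₀ y + s * udot y)
    (A : ℝ → Set (E n)) (hA : ∀ s, A s = {y ∈ P | u s y ≠ biconj P (u s) y})
    (ψ : ℝ → E n → ℝ) (hψ : ∀ s x, ψ s x = sSup {r : ℝ | ∃ y ∈ P, r = ⟪x, y⟫ - u s y})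
    (s : ℝ) (hs : 0 < s) (y : E n) (hy : y ∈ A s \ frontier P)
    (x : E n) (hx : x = gradient (biconj P (u s)) y) :
    convexHull ℝ ((fun w => (-udot w, w)) '' reachable ψ s x) ⊆ subdiffT ψ s x ∧
    subdiffT ψ s x ⊆ convexHull ℝ ((fun w => (-udot w, w)) '' subdiffR (ψ s) x) := by
  classical
  obtain ⟨hPeq, hPcomp, hPint, -, -⟩ := hP
  obtain ⟨⟨U₁, hU₁o, hPU₁, F, hF, hu₀F⟩, -, -, -, U₂, hU₂o, hPU₂, hudot⟩ := hD
  have hPne : P.Nonempty := hPint.mono interior_subset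
  have hPcl : IsClosed P := hPcomp.isClosed
  have huGc : Continuous (uG v lam) := by
    unfold uG lfun
    refine continuous_finset_sum _ fun k _ => Real.continuous_mul_log.comp ?_
    exact (continuous_id.inner continuous_const).sub continuous_const
  have hu₀c : ContinuousOn u₀ P := by
    have h1 : ContinuousOn (fun y => uG v lam y + F y) P :=
      (huGc.continuousOn).add (hF.continuousOn.mono hPU₁)
    exact h1.congr fun y hy => hu₀F y hy
  have hudotc : ContinuousOn udot P := hudot.continuousOn.mono hPU₂
  have hudotAt : ∀ z ∈ P, ContinuousAt udot z := fun z hz =>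
    hudot.continuousOn.continuousAt (hU₂o.mem_nhds (hPU₂ hz))
  have husc : ∀ t, ContinuousOn (u t) P := by
    intro t
    have h1 : ContinuousOn (fun y => u₀ y + t * udot y) P :=
      hu₀c.add (continuousOn_const.mul hudotc)
    exact h1.congr fun y hy => hu t y
  have hmax : ∀ t z, ∃ y₀ ∈ P, (∀ w ∈ P, ⟪z, w⟫ - u t w ≤ ⟪z, y₀⟫ - u t y₀) ∧
      ψ t z = ⟪z, y₀⟫ - u t y₀ := by
    intro t z
    have hc : ContinuousOn (fun w => ⟪z, w⟫ - u t w) P :=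
      ((continuous_const.inner continuous_id).continuousOn).sub (husc t)
    obtain ⟨y₀, hy₀, hmx⟩ := hPcomp.exists_isMaxOn hPne hc
    refine ⟨y₀, hy₀, fun w hw => hmx hw, ?_⟩
    rw [hψ]
    have hset : {r : ℝ | ∃ w ∈ P, r = ⟪z, w⟫ - u t w} = (fun w => ⟪z, w⟫ - u t w) '' P := by
      ext r
      constructor
      · rintro ⟨w, hw, rfl⟩; exact ⟨w, hw, rfl⟩
      · rintro ⟨w, hw, rfl⟩; exact ⟨w, hw, rfl⟩
    rw [hset]
    exact IsGreatest.csSup_eq ⟨⟨y₀, hy₀, rfl⟩, by rintro r ⟨w, hw, rfl⟩; exact hmx hw⟩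
  have hub : ∀ t z w, w ∈ P → ⟪z, w⟫ - u t w ≤ ψ t z := by
    intro t z w hw
    obtain ⟨y₀, hy₀, hmx, hval⟩ := hmax t z
    rw [hval]; exact hmx w hw
  obtain ⟨R, hR⟩ := hPcomp.exists_bound_of_continuousOn continuousOn_id
  obtain ⟨M, hM⟩ := hPcomp.exists_bound_of_continuousOn hudotc
  obtain ⟨y₁, hy₁⟩ := hPne
  have hR0 : 0 ≤ R := le_trans (norm_nonneg y₁) (hR y₁ hy₁)
  have hM0 : 0 ≤ M := le_trans (norm_nonneg _) (hM y₁ hy₁)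
  have hLip : ∀ t1 z1 t2 z2, ψ t1 z1 ≤ ψ t2 z2 + M * |t1 - t2| + R * ‖z1 - z2‖ := by
    intro t1 z1 t2 z2
    obtain ⟨y₀, hy₀, -, hval⟩ := hmax t1 z1
    have h1 : ⟪z2, y₀⟫ - u t2 y₀ ≤ ψ t2 z2 := hub _ _ _ hy₀
    have h2 : ⟪z1 - z2, y₀⟫ ≤ R * ‖z1 - z2‖ := by
      calc ⟪z1 - z2, y₀⟫ ≤ ‖z1 - z2‖ * ‖y₀‖ := real_inner_le_norm _ _
        _ ≤ ‖z1 - z2‖ * R := mul_le_mul_of_nonneg_left (hR y₀ hy₀) (norm_nonneg _)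
        _ = R * ‖z1 - z2‖ := mul_comm _ _
    have h3 : (t2 - t1) * udot y₀ ≤ M * |t1 - t2| := by
      have habs : |udot y₀| ≤ M := hM y₀ hy₀
      calc (t2 - t1) * udot y₀ ≤ |(t2 - t1) * udot y₀| := le_abs_self _
        _ = |t1 - t2| * |udot y₀| := by rw [abs_mul, abs_sub_comm]
        _ ≤ |t1 - t2| * M := mul_le_mul_of_nonneg_left habs (abs_nonneg _)
        _ = M * |t1 - t2| := mul_comm _ _
    have hdecomp : ⟪z1, y₀⟫ - u t1 y₀ =
        (⟪z2, y₀⟫ - u t2 y₀) + ⟪z1 - z2, y₀⟫ + (t2 - t1) * udot y₀ := by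
      simp only [hu, inner_sub_left]; ring
    linarith [hval.le, hval.ge]
  have hψcont : Continuous (fun q : ℝ × E n => ψ q.1 q.2) := by
    have hK : (0:ℝ) ≤ M + R := by linarith
    refine LipschitzWith.continuous (K := ⟨M + R, hK⟩) ?_
    apply LipschitzWith.of_dist_le_mul
    intro q1 q2
    have h1 := hLip q1.1 q1.2 q2.1 q2.2
    have h2 := hLip q2.1 q2.2 q1.1 q1.2
    have hd1 : |q1.1 - q2.1| ≤ dist q1 q2 := by
      rw [Prod.dist_eq, ← Real.dist_eq]; exact le_max_left _ _
    have hd2 : ‖q1.2 - q2.2‖ ≤ dist q1 q2 := by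
      rw [Prod.dist_eq, ← dist_eq_norm]; exact le_max_right _ _
    have hd1' : |q2.1 - q1.1| ≤ dist q1 q2 := by rw [abs_sub_comm]; exact hd1
    have hd2' : ‖q2.2 - q1.2‖ ≤ dist q1 q2 := by rw [norm_sub_rev]; exact hd2
    have hm1 : M * |q1.1 - q2.1| ≤ M * dist q1 q2 := mul_le_mul_of_nonneg_left hd1 hM0
    have hm2 : R * ‖q1.2 - q2.2‖ ≤ R * dist q1 q2 := mul_le_mul_of_nonneg_left hd2 hR0
    have hm1' : M * |q2.1 - q1.1| ≤ M * dist q1 q2 := mul_le_mul_of_nonneg_left hd1' hM0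
    have hm2' : R * ‖q2.2 - q1.2‖ ≤ R * dist q1 q2 := mul_le_mul_of_nonneg_left hd2' hR0
    have hcoe : (((⟨M + R, hK⟩ : NNReal) : ℝ)) = M + R := rfl
    calc dist (ψ q1.1 q1.2) (ψ q2.1 q2.2) ≤ (M + R) * dist q1 q2 := by
          rw [Real.dist_eq, abs_sub_le_iff]
          constructor <;> nlinarith
      _ = (((⟨M + R, hK⟩ : NNReal) : ℝ)) * dist q1 q2 := by rw [hcoe]
  have huseq : ∀ (t : ℝ) (ys : ℕ → E n) (y₂ : E n), (∀ k, ys k ∈ P) →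
      Tendsto ys atTop (𝓝 y₂) → y₂ ∈ P →
      Tendsto (fun k => u t (ys k)) atTop (𝓝 (u t y₂)) := by
    intro t ys y₂ hmem hlim hy₂
    exact ((husc t) y₂ hy₂).tendsto.comp
      (tendsto_nhdsWithin_iff.mpr ⟨hlim, Filter.Eventually.of_forall hmem⟩)
  constructor
  · -- LEFT INCLUSION
    have hconv : Convex ℝ (subdiffT ψ s x) := by
      intro p hp q hq a b ha hb hab
      intro t z
      have h1 := hp t z
      have h2 := hq t z
      have key : a * (ψ s x + p.1 * (t - s) + ⟪p.2, z - x⟫)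
          + b * (ψ s x + q.1 * (t - s) + ⟪q.2, z - x⟫) ≤ ψ t z := by
        calc a * (ψ s x + p.1 * (t - s) + ⟪p.2, z - x⟫)
            + b * (ψ s x + q.1 * (t - s) + ⟪q.2, z - x⟫)
            ≤ a * ψ t z + b * ψ t z :=
              add_le_add (mul_le_mul_of_nonneg_left h1 ha) (mul_le_mul_of_nonneg_left h2 hb)
          _ = ψ t z := by rw [← add_mul, hab, one_mul]
      have hfst : (a • p + b • q).1 = a * p.1 + b * q.1 := rfl
      have hsnd : ⟪(a • p + b • q).2, z - x⟫ = a * ⟪p.2, z - x⟫ + b * ⟪q.2, z - x⟫ := by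
        have h5 : (a • p + b • q).2 = a • p.2 + b • q.2 := rfl
        rw [h5, inner_add_left, real_inner_smul_left, real_inner_smul_left]
      rw [hfst, hsnd]
      have habx : ψ s x = a * ψ s x + b * ψ s x := by rw [← add_mul, hab, one_mul]
      nlinarith [key]
    apply convexHull_min ?_ hconv
    rintro - ⟨w, hw, rfl⟩
    obtain ⟨xk, hdiff, hxk, hgrad⟩ := hw
    have hk : ∀ k, gradient (ψ s) (xk k) ∈ P ∧
        ψ s (xk k) = ⟪xk k, gradient (ψ s) (xk k)⟫ - u s (gradient (ψ s) (xk k)) := by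
      intro k
      obtain ⟨y₀, hy₀, hmx, hval⟩ := hmax s (xk k)
      have hsub : ∀ z, ψ s (xk k) + ⟪y₀, z - xk k⟫ ≤ ψ s z := by
        intro z
        have h1 := hub s z y₀ hy₀
        have h2 : ψ s (xk k) + ⟪y₀, z - xk k⟫ = ⟪z, y₀⟫ - u s y₀ := by
          rw [hval, inner_sub_right]
          have e1 : ⟪y₀, z⟫ = ⟪z, y₀⟫ := real_inner_comm _ _
          have e2 : ⟪y₀, xk k⟫ = ⟪xk k, y₀⟫ := real_inner_comm _ _
          rw [e1, e2]; ring
        linarith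
      have heq := grad_eq_of_subgrad (hdiff k) hsub
      rw [heq]; exact ⟨hy₀, hval⟩
    intro t z
    set yk := fun k => gradient (ψ s) (xk k) with hykdef
    have hstep : ∀ k, ψ s (xk k) + (-udot (yk k)) * (t - s) + ⟪yk k, z - xk k⟫ ≤ ψ t z := by
      intro k
      have hyP := (hk k).1
      have hval := (hk k).2
      have h1 := hub t z (yk k) hyP
      have h2 : ψ s (xk k) + (-udot (yk k)) * (t - s) + ⟪yk k, z - xk k⟫
          = ⟪z, yk k⟫ - u t (yk k) := by
        rw [hval, inner_sub_right]
        have e1 : ⟪yk k, z⟫ = ⟪z, yk k⟫ := real_inner_comm _ _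
        have e2 : ⟪yk k, xk k⟫ = ⟪xk k, yk k⟫ := real_inner_comm _ _
        rw [e1, e2]
        simp only [hu]; ring
      linarith
    have hwP : w ∈ P := hPcl.mem_of_tendsto hgrad (Filter.Eventually.of_forall fun k => (hk k).1)
    have hψc : Tendsto (fun k => ψ s (xk k)) atTop (𝓝 (ψ s x)) :=
      (hψcont.tendsto (s, x)).comp (tendsto_const_nhds.prodMk_nhds hxk)
    have hulim : Tendsto (fun k => udot (yk k)) atTop (𝓝 (udot w)) :=
      (hudotAt w hwP).tendsto.comp hgrad
    have hinner : Tendsto (fun k => ⟪yk k, z - xk k⟫) atTop (𝓝 ⟪w, z - x⟫) :=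
      hgrad.inner (tendsto_const_nhds.sub hxk)
    have hfull : Tendsto (fun k => ψ s (xk k) + (-udot (yk k)) * (t - s) + ⟪yk k, z - xk k⟫)
        atTop (𝓝 (ψ s x + (-udot w) * (t - s) + ⟪w, z - x⟫)) :=
      (hψc.add ((hulim.neg).mul_const _)).add hinner
    exact le_of_tendsto hfull (Filter.Eventually.of_forall hstep)
  · -- RIGHT INCLUSION
    intro p hp
    set Y := {w ∈ P | ψ s x = ⟪x, w⟫ - u s w} with hYdef
    have hYP : Y ⊆ P := fun w hw => hw.1
    have hYsub : Y ⊆ subdiffR (ψ s) x := by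
      rintro w ⟨hwP, hwv⟩ z
      have h1 := hub s z w hwP
      have h2 : ψ s x + ⟪w, z - x⟫ = ⟪z, w⟫ - u s w := by
        rw [hwv, inner_sub_right]
        have e1 : ⟪w, z⟫ = ⟪z, w⟫ := real_inner_comm _ _
        have e2 : ⟪w, x⟫ = ⟪x, w⟫ := real_inner_comm _ _
        rw [e1, e2]; ring
      linarith
    have hKsub := convexHull_mono (𝕜 := ℝ) (Set.image_mono (f := fun w => ((-udot w, w) : ℝ × E n)) hYsub)
    apply hKsub
    by_contra hpK
    have hYcomp : IsCompact Y := by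
      refine hPcomp.of_isClosed_subset ?_ hYP
      apply IsSeqClosed.isClosed
      intro ys w hmem hlim
      have hwP : w ∈ P := hPcl.mem_of_tendsto hlim
        (Filter.Eventually.of_forall fun k => (hmem k).1)
      refine ⟨hwP, ?_⟩
      have hval : Tendsto (fun k => ⟪x, ys k⟫ - u s (ys k)) atTop (𝓝 (⟪x, w⟫ - u s w)) :=
        (tendsto_const_nhds.inner hlim).sub
          (huseq s ys w (fun k => (hmem k).1) hlim hwP)
      have heq : (fun k => ⟪x, ys k⟫ - u s (ys k)) = fun _ : ℕ => ψ s x :=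
        funext fun k => ((hmem k).2).symm
      rw [heq] at hval
      exact tendsto_nhds_unique (tendsto_const_nhds) hval
    have hmapc : ContinuousOn (fun w => ((-udot w, w) : ℝ × E n)) P :=
      (hudotc.neg).prodMk continuousOn_id
    have hK : IsCompact (convexHull ℝ ((fun w => ((-udot w, w) : ℝ × E n)) '' Y)) :=
      isCompact_convexHull_of_isCompact (hYcomp.image_of_continuousOn (hmapc.mono hYP))
    obtain ⟨f, c, hfc, hcp⟩ :=
      geometric_hahn_banach_closed_point (convex_convexHull ℝ _) hK.isClosed hpK
    set τ := f ((1 : ℝ), (0 : E n)) with hτ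
    set ζ := (InnerProductSpace.toDual ℝ (E n)).symm
      (f.comp (ContinuousLinearMap.inr ℝ ℝ (E n))) with hζ
    have hfeq : ∀ (t : ℝ) (z : E n), f (t, z) = t * τ + ⟪ζ, z⟫ := by
      intro t z
      have h1 : ((t, z) : ℝ × E n) = t • ((1 : ℝ), (0 : E n)) + ((0 : ℝ), z) := by
        simp [Prod.ext_iff]
      rw [h1, map_add, ContinuousLinearMap.map_smul, smul_eq_mul]
      congr 1
      have h2 := InnerProductSpace.toDual_symm_apply (𝕜 := ℝ) (E := E n)
        (y := f.comp (ContinuousLinearMap.inr ℝ ℝ (E n))) (x := z)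
      rw [hζ, h2]
      simp
    have hfp : f p = p.1 * τ + ⟪ζ, p.2⟫ := by
      have h1 := hfeq p.1 p.2
      simpa using h1
    set ε : ℕ → ℝ := fun k => 1 / (k + 1) with hεdef
    have hεpos : ∀ k, 0 < ε k := fun k => by positivity
    have hε0 : Tendsto ε atTop (𝓝 0) := tendsto_one_div_add_atTop_nhds_zero_nat
    set tk : ℕ → ℝ := fun k => s + ε k * τ with htkdef
    set zk : ℕ → E n := fun k => x + ε k • ζ with hzkdef
    choose yk hykP hmaxk hvalk using fun k => hmax (tk k) (zk k)
    have key1 : ∀ k, f p ≤ f (-udot (yk k), yk k) := by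
      intro k
      have hsub := hp (tk k) (zk k)
      have h1 := hub s x (yk k) (hykP k)
      have h2 := hvalk k
      have hexp : ⟪zk k, yk k⟫ - u (tk k) (yk k) =
          (⟪x, yk k⟫ - u s (yk k)) + ε k * (⟪ζ, yk k⟫ - τ * udot (yk k)) := by
        simp only [hu, hzkdef, htkdef, inner_add_left, real_inner_smul_left]
        ring
      have hlow : p.1 * (tk k - s) + ⟪p.2, zk k - x⟫ = ε k * f p := by
        have e1 : tk k - s = ε k * τ := by simp [htkdef]
        have e2 : zk k - x = ε k • ζ := by simp [hzkdef]
        rw [e1, e2, real_inner_smul_right, hfp]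
        have e3 : ⟪p.2, ζ⟫ = ⟪ζ, p.2⟫ := real_inner_comm _ _
        rw [e3]; ring
      have hfy : f (-udot (yk k), yk k) = -udot (yk k) * τ + ⟪ζ, yk k⟫ := hfeq _ _
      have hchain : ε k * f p ≤ ε k * f (-udot (yk k), yk k) := by
        have hA : ψ s x + ε k * f p ≤ ψ (tk k) (zk k) := by linarith [hsub, hlow.le, hlow.ge]
        have hB : ψ (tk k) (zk k) ≤ ψ s x + ε k * (⟪ζ, yk k⟫ - τ * udot (yk k)) := by
          rw [h2, hexp]; linarith [h1]
        have hC : ε k * (⟪ζ, yk k⟫ - τ * udot (yk k)) = ε k * f (-udot (yk k), yk k) := by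
          rw [hfy]; ring
        linarith
      exact le_of_mul_le_mul_left hchain (hεpos k)
    obtain ⟨ystar, hystarP, φ, hφmono, hconvφ⟩ := hPcomp.tendsto_subseq hykP
    have hφtop : Tendsto φ atTop atTop := hφmono.tendsto_atTop
    have hεφ : Tendsto (fun k => ε (φ k)) atTop (𝓝 0) := hε0.comp hφtop
    have htkφ : Tendsto (fun k => tk (φ k)) atTop (𝓝 s) := by
      have h1 := tendsto_const_nhds (x := s) (f := atTop (α := ℕ))
      have h2 := h1.add (hεφ.mul_const τ)
      have h3 : s + (0:ℝ) * τ = s := by rw [zero_mul, add_zero]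
      rw [h3] at h2
      exact h2
    have hzkφ : Tendsto (fun k => zk (φ k)) atTop (𝓝 x) := by
      have h1 := tendsto_const_nhds (x := x) (f := atTop (α := ℕ))
      have h2 := h1.add (hεφ.smul_const ζ)
      have h3 : x + (0:ℝ) • ζ = x := by rw [zero_smul, add_zero]
      rw [h3] at h2
      exact h2
    have hψφ : Tendsto (fun k => ψ (tk (φ k)) (zk (φ k))) atTop (𝓝 (ψ s x)) :=
      (hψcont.tendsto (s, x)).comp (htkφ.prodMk_nhds hzkφ)
    have hudl : Tendsto (fun k => udot (yk (φ k))) atTop (𝓝 (udot ystar)) :=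
      (hudotAt ystar hystarP).tendsto.comp hconvφ
    have hukφ : Tendsto (fun k => ⟪zk (φ k), yk (φ k)⟫ - u (tk (φ k)) (yk (φ k))) atTop
        (𝓝 (⟪x, ystar⟫ - u s ystar)) := by
      have hinner : Tendsto (fun k => ⟪zk (φ k), yk (φ k)⟫) atTop (𝓝 ⟪x, ystar⟫) :=
        hzkφ.inner hconvφ
      have hu₀l : Tendsto (fun k => u₀ (yk (φ k))) atTop (𝓝 (u₀ ystar)) :=
        (hu₀c ystar hystarP).tendsto.comp
          (tendsto_nhdsWithin_iff.mpr ⟨hconvφ, Filter.Eventually.of_forall fun k => hykP (φ k)⟩)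
      have huu : Tendsto (fun k => u (tk (φ k)) (yk (φ k))) atTop (𝓝 (u s ystar)) := by
        have h1 : Tendsto (fun k => u₀ (yk (φ k)) + tk (φ k) * udot (yk (φ k))) atTop
            (𝓝 (u₀ ystar + s * udot ystar)) := hu₀l.add (htkφ.mul hudl)
        have heq : (fun k => u (tk (φ k)) (yk (φ k)))
            = fun k => u₀ (yk (φ k)) + tk (φ k) * udot (yk (φ k)) := funext fun k => hu _ _
        rw [heq, hu s ystar]
        exact h1
      exact hinner.sub huu
    have hystarY : ystar ∈ Y := by
      refine ⟨hystarP, ?_⟩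
      have heq : (fun k => ψ (tk (φ k)) (zk (φ k)))
          = fun k => ⟪zk (φ k), yk (φ k)⟫ - u (tk (φ k)) (yk (φ k)) :=
        funext fun k => hvalk (φ k)
      rw [heq] at hψφ
      exact tendsto_nhds_unique hψφ hukφ
    have hfl : Tendsto (fun k => f (-udot (yk (φ k)), yk (φ k))) atTop
        (𝓝 (f (-udot ystar, ystar))) := by
      have hm : Tendsto (fun k => ((-udot (yk (φ k)), yk (φ k)) : ℝ × E n)) atTop
          (𝓝 (-udot ystar, ystar)) := (hudl.neg).prodMk_nhds hconvφ
      exact (f.continuous.tendsto _).comp hm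
    have hge : f p ≤ f (-udot ystar, ystar) :=
      ge_of_tendsto hfl (Filter.Eventually.of_forall fun k => key1 (φ k))
    have hlt : f (-udot ystar, ystar) < c :=
      hfc _ (subset_convexHull ℝ _ ⟨ystar, hystarY, rfl⟩)
    linarith
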